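/- arXiv:2306.06654 — 3 statements merged into one kernel-verified Lean document; each statement's English description precedes it below -/
import Mathlib

section
/- Let d, k ≥ 1 and set n = d + k. Let A be a real n×d matrix and B a real n×k matrix such that BᵀB = I_k (B has orthonormal columns), AᵀB = 0, and the n×n block matrix (A|B) obtained by juxtaposing the columns of A and B has positive determinant. Then dist((A|B), SO(n)) = dist(A, {Q ∈ ℝ^{n×d} : QᵀQ = I_d}), where both distances are taken with respect to the Frobenius norm. -/
open Matrix

/-- Frobenius norm of a real matrix. -/
noncomputable def frobNorm {m n : Type*} [Fintype m] [Fintype n] (A : Matrix m n ℝ) : ℝ :=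
  Real.sqrt (∑ i, ∑ j, (A i j) ^ 2)

/-- Distance (w.r.t. the Frobenius norm) from a matrix to a set of matrices. -/
noncomputable def frobDist {m n : Type*} [Fintype m] [Fintype n]
    (A : Matrix m n ℝ) (K : Set (Matrix m n ℝ)) : ℝ :=
  sInf ((fun X => frobNorm (A - X)) '' K)

/-- The special orthogonal group `SO(n)` as a set of real `n × n` matrices. -/
def SOset (n : ℕ) : Set (Matrix (Fin n) (Fin n) ℝ) :=
  {A | Aᵀ * A = 1 ∧ A.det = 1}

/-- The `n × (d + k)` matrix obtained by juxtaposing the columns of an `n × d` matrix `A`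
and an `n × k` matrix `B`. -/
def juxt {n d k : ℕ} (A : Matrix (Fin n) (Fin d) ℝ) (B : Matrix (Fin n) (Fin k) ℝ) :
    Matrix (Fin n) (Fin (d + k)) ℝ :=
  Matrix.of fun i => Fin.append (A i) (B i)

namespace FrobSOAux

open Matrix

/-- Matrix inner product (Frobenius). -/
noncomputable def ip {m p : Type*} [Fintype m] [Fintype p] (A B : Matrix m p ℝ) : ℝ :=
  ∑ i, ∑ j, A i j * B i j

lemma ip_eq_trace {m p : Type*} [Fintype m] [Fintype p] (A B : Matrix m p ℝ) :
    ip A B = (Aᵀ * B).trace := by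
  unfold ip Matrix.trace
  rw [Finset.sum_comm]
  simp [Matrix.diag, Matrix.mul_apply]

lemma frobNorm_eq_ip {m p : Type*} [Fintype m] [Fintype p] (A : Matrix m p ℝ) :
    frobNorm A = Real.sqrt (ip A A) := by
  simp [frobNorm, ip, sq]

lemma ip_self_nonneg {m p : Type*} [Fintype m] [Fintype p] (A : Matrix m p ℝ) :
    0 ≤ ip A A :=
  Finset.sum_nonneg fun _ _ => Finset.sum_nonneg fun _ _ => mul_self_nonneg _

lemma ip_sub_self {m p : Type*} [Fintype m] [Fintype p] (A X : Matrix m p ℝ) :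
    ip (A - X) (A - X) = ip A A - 2 * ip A X + ip X X := by
  have h : ∀ (i : m) (j : p),
      (A - X) i j * (A - X) i j = A i j * A i j - 2 * (A i j * X i j) + X i j * X i j := by
    intro i j; simp only [Matrix.sub_apply]; ring
  simp only [ip]
  rw [Finset.sum_congr rfl fun i _ => Finset.sum_congr rfl fun j _ => h i j]
  simp [Finset.sum_add_distrib, Finset.sum_sub_distrib, Finset.mul_sum]

lemma ip_self_of_orth {m p : Type*} [Fintype m] [Fintype p] [DecidableEq p]
    (X : Matrix m p ℝ) (hX : Xᵀ * X = 1) : ip X X = (Fintype.card p : ℝ) := by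
  rw [ip_eq_trace, hX, Matrix.trace_one]

variable {n d k : ℕ}

lemma juxt_apply_left (A : Matrix (Fin n) (Fin d) ℝ) (B : Matrix (Fin n) (Fin k) ℝ)
    (i : Fin n) (j : Fin d) : juxt A B i (Fin.castAdd k j) = A i j :=
  Fin.append_left _ _ _

lemma juxt_apply_right (A : Matrix (Fin n) (Fin d) ℝ) (B : Matrix (Fin n) (Fin k) ℝ)
    (i : Fin n) (j : Fin k) : juxt A B i (Fin.natAdd d j) = B i j :=
  Fin.append_right _ _ _

lemma ip_juxt (A C : Matrix (Fin n) (Fin d) ℝ) (B D : Matrix (Fin n) (Fin k) ℝ) :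
    ip (juxt A B) (juxt C D) = ip A C + ip B D := by
  unfold ip
  rw [← Finset.sum_add_distrib]
  refine Finset.sum_congr rfl fun i _ => ?_
  rw [Fin.sum_univ_add]
  simp [juxt_apply_left, juxt_apply_right]

lemma juxt_sub (A C : Matrix (Fin n) (Fin d) ℝ) (B D : Matrix (Fin n) (Fin k) ℝ) :
    juxt A B - juxt C D = juxt (A - C) (B - D) := by
  ext i j
  refine Fin.addCases (fun j => ?_) (fun j => ?_) j <;>
    simp [juxt_apply_left, juxt_apply_right]

lemma juxt_submatrix (X : Matrix (Fin n) (Fin (d + k)) ℝ) :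
    juxt (X.submatrix id (Fin.castAdd k)) (X.submatrix id (Fin.natAdd d)) = X := by
  ext i j
  refine Fin.addCases (fun j => ?_) (fun j => ?_) j <;>
    simp [juxt_apply_left, juxt_apply_right]

lemma submatrix_stiefel (X : Matrix (Fin n) (Fin (d + k)) ℝ) (hX : Xᵀ * X = 1) :
    (X.submatrix id (Fin.castAdd k))ᵀ * X.submatrix id (Fin.castAdd k) = 1 := by
  ext a b
  have h1 : ((X.submatrix id (Fin.castAdd k))ᵀ * X.submatrix id (Fin.castAdd k)) a b
      = (Xᵀ * X) (Fin.castAdd k a) (Fin.castAdd k b) := by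
    simp [Matrix.mul_apply]
  rw [h1, hX]
  simp [Matrix.one_apply, Fin.castAdd_inj]

lemma juxt_mulVec (C : Matrix (Fin n) (Fin d) ℝ) (B : Matrix (Fin n) (Fin k) ℝ)
    (x : Fin (d + k) → ℝ) :
    (juxt C B).mulVec x =
      C.mulVec (fun j => x (Fin.castAdd k j)) + B.mulVec (fun j => x (Fin.natAdd d j)) := by
  funext i
  simp [Matrix.mulVec, dotProduct, Fin.sum_univ_add, juxt_apply_left, juxt_apply_right]

lemma dot_split (x y : Fin (d + k) → ℝ) :
    x ⬝ᵥ y = (fun j => x (Fin.castAdd k j)) ⬝ᵥ (fun j => y (Fin.castAdd k j))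
      + (fun j => x (Fin.natAdd d j)) ⬝ᵥ (fun j => y (Fin.natAdd d j)) := by
  simp [dotProduct, Fin.sum_univ_add]

lemma dot_self_nonneg {p : Type*} [Fintype p] (v : p → ℝ) : 0 ≤ v ⬝ᵥ v :=
  Finset.sum_nonneg fun _ _ => mul_self_nonneg _

lemma dot_mulVec_mulVec {p q : Type*} [Fintype p] [Fintype q]
    (M : Matrix (Fin n) p ℝ) (N : Matrix (Fin n) q ℝ) (a : p → ℝ) (b : q → ℝ) :
    (M.mulVec a) ⬝ᵥ (N.mulVec b) = a ⬝ᵥ ((Mᵀ * N).mulVec b) := by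
  rw [Matrix.dotProduct_mulVec, Matrix.dotProduct_mulVec, ← Matrix.vecMul_vecMul,
    Matrix.vecMul_transpose]

/-! ### Givens rotations -/

lemma std_transpose (a b : Fin n) :
    (Matrix.single a b (1 : ℝ))ᵀ = Matrix.single b a 1 := by
  ext x y
  simp [Matrix.single, Matrix.transpose_apply, and_comm]

/-- Projection part of a Givens rotation. -/
noncomputable def givP (i j : Fin n) : Matrix (Fin n) (Fin n) ℝ :=
  Matrix.single i i 1 + Matrix.single j j 1

/-- Skew part of a Givens rotation. -/
noncomputable def givJ (i j : Fin n) : Matrix (Fin n) (Fin n) ℝ :=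
  Matrix.single j i 1 - Matrix.single i j 1

/-- A Givens rotation. -/
noncomputable def givens (i j : Fin n) (c s : ℝ) : Matrix (Fin n) (Fin n) ℝ :=
  1 + (c - 1) • givP i j + s • givJ i j

lemma givP_transpose (i j : Fin n) : (givP i j)ᵀ = givP i j := by
  simp [givP, Matrix.transpose_add, std_transpose]

lemma givJ_transpose (i j : Fin n) : (givJ i j)ᵀ = -givJ i j := by
  simp only [givJ, Matrix.transpose_sub, std_transpose, neg_sub]

lemma givP_mul_givP {i j : Fin n} (hij : i ≠ j) : givP i j * givP i j = givP i j := by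
  simp [givP, add_mul, mul_add, Matrix.single_mul_single_same,
    Matrix.single_mul_single_of_ne, hij, hij.symm]

lemma givJ_mul_givJ {i j : Fin n} (hij : i ≠ j) : givJ i j * givJ i j = -givP i j := by
  simp [givJ, givP, sub_mul, mul_sub, Matrix.single_mul_single_same,
    Matrix.single_mul_single_of_ne, hij, hij.symm]
  try abel

lemma givP_mul_givJ {i j : Fin n} (hij : i ≠ j) : givP i j * givJ i j = givJ i j := by
  simp [givJ, givP, add_mul, mul_sub, mul_add, sub_mul, Matrix.single_mul_single_same,
    Matrix.single_mul_single_of_ne, hij, hij.symm]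
  try abel

lemma givJ_mul_givP {i j : Fin n} (hij : i ≠ j) : givJ i j * givP i j = givJ i j := by
  simp [givJ, givP, add_mul, mul_sub, mul_add, sub_mul, Matrix.single_mul_single_same,
    Matrix.single_mul_single_of_ne, hij, hij.symm]
  try abel

lemma givens_transpose (i j : Fin n) (c s : ℝ) :
    (givens i j c s)ᵀ = givens i j c (-s) := by
  simp [givens, Matrix.transpose_add, Matrix.transpose_smul, givP_transpose, givJ_transpose,
    smul_neg, neg_smul, Matrix.transpose_one]

lemma givens_orth {i j : Fin n} (hij : i ≠ j) {c s : ℝ} (hcs : c ^ 2 + s ^ 2 = 1) :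
    (givens i j c s)ᵀ * givens i j c s = 1 := by
  rw [givens_transpose]
  show (1 + (c - 1) • givP i j + (-s) • givJ i j) * (1 + (c - 1) • givP i j + s • givJ i j) = 1
  have key : (1 + (c - 1) • givP i j + (-s) • givJ i j)
        * (1 + (c - 1) • givP i j + s • givJ i j)
      = 1 + ((c ^ 2 + s ^ 2) - 1) • givP i j := by
    simp only [add_mul, mul_add, one_mul, mul_one, neg_mul, mul_neg, neg_neg,
      smul_mul_assoc, mul_smul_comm, givP_mul_givP hij, givJ_mul_givJ hij,
      givP_mul_givJ hij, givJ_mul_givP hij, smul_smul, smul_neg, neg_smul]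
    match_scalars <;> ring
  rw [key, hcs]
  simp

lemma givens_one (i j : Fin n) : givens i j 1 0 = 1 := by
  simp [givens]

lemma exists_cos_sin {c s : ℝ} (hcs : c ^ 2 + s ^ 2 = 1) :
    ∃ t : ℝ, Real.cos t = c ∧ Real.sin t = s := by
  have hc1 : -1 ≤ c := by nlinarith
  have hc2 : c ≤ 1 := by nlinarith
  rcases le_or_gt 0 s with h | h
  · refine ⟨Real.arccos c, Real.cos_arccos hc1 hc2, ?_⟩
    rw [Real.sin_arccos, show 1 - c ^ 2 = s ^ 2 by nlinarith, Real.sqrt_sq h]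
  · refine ⟨-Real.arccos c, by rw [Real.cos_neg]; exact Real.cos_arccos hc1 hc2, ?_⟩
    rw [Real.sin_neg, Real.sin_arccos, show 1 - c ^ 2 = s ^ 2 by nlinarith,
      Real.sqrt_sq_eq_abs, abs_of_neg h, neg_neg]

lemma givens_det {i j : Fin n} (hij : i ≠ j) {c s : ℝ} (hcs : c ^ 2 + s ^ 2 = 1) :
    (givens i j c s).det = 1 := by
  obtain ⟨t, hc, hs⟩ := exists_cos_sin hcs
  rw [← hc, ← hs]
  set f : ℝ → ℝ := fun u => (givens i j (Real.cos u) (Real.sin u)).det with hf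
  show f t = 1
  have hcont : Continuous f := by
    apply Continuous.matrix_det
    unfold givens
    exact (continuous_const.add
      (((Real.continuous_cos.sub continuous_const).smul continuous_const))).add
      (Real.continuous_sin.smul continuous_const)
  have hsq : ∀ u, f u = 1 ∨ f u = -1 := by
    intro u
    have h1 : f u * f u = 1 := by
      have hG := givens_orth hij (Real.cos_sq_add_sin_sq u)
      have hd := congrArg Matrix.det hG
      rwa [Matrix.det_mul, Matrix.det_transpose, Matrix.det_one] at hd
    exact mul_self_eq_one_iff.mp h1
  have h0 : f 0 = 1 := by simp [hf, givens_one]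
  by_contra hne
  have ht : f t = -1 := (hsq t).resolve_left hne
  have hmem : (0 : ℝ) ∈ Set.uIcc (f 0) (f t) := by
    rw [h0, ht]
    rw [Set.mem_uIcc]
    right; constructor <;> norm_num
  obtain ⟨u, _, hu⟩ := intermediate_value_uIcc hcont.continuousOn hmem
  rcases hsq u with h | h <;> rw [hu] at h <;> norm_num at h

lemma trace_mul_std (T : Matrix (Fin n) (Fin n) ℝ) (a b : Fin n) :
    (T * Matrix.single a b (1 : ℝ)).trace = T b a := by
  unfold Matrix.trace
  rw [Finset.sum_eq_single b]
  · simp [Matrix.diag]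
  · intro x _ hxb
    simp [Matrix.diag, hxb]
  · intro h
    exact absurd (Finset.mem_univ b) h

lemma trace_mul_givens (T : Matrix (Fin n) (Fin n) ℝ) (i j : Fin n) (c s : ℝ) :
    (T * givens i j c s).trace
      = T.trace + (c - 1) * (T i i + T j j) + s * (T i j - T j i) := by
  simp only [givens, givP, givJ, mul_add, Matrix.mul_smul, mul_one,
    Matrix.trace_add, Matrix.trace_smul, mul_sub, Matrix.trace_sub, trace_mul_std,
    smul_eq_mul]

lemma scalar_opt {a b : ℝ} (h : ∀ c s : ℝ, c ^ 2 + s ^ 2 = 1 → c * a + s * b ≤ a) :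
    b = 0 ∧ 0 ≤ a := by
  have ha : 0 ≤ a := by have := h (-1) 0 (by norm_num); linarith
  rcases eq_or_lt_of_le (show (0 : ℝ) ≤ a ^ 2 + b ^ 2 by positivity) with h0 | h0
  · constructor
    · nlinarith
    · exact ha
  · set r := Real.sqrt (a ^ 2 + b ^ 2) with hr
    have hrpos : 0 < r := Real.sqrt_pos.mpr h0
    have hr2 : r ^ 2 = a ^ 2 + b ^ 2 := Real.sq_sqrt h0.le
    have hkey := h (a / r) (b / r) (by field_simp; linarith [hr2])
    have hra : r ≤ a := by
      have : a / r * a + b / r * b = r := by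
        field_simp
        linarith [hr2]
      linarith [hkey, this.symm.le, this.ge]
    have hb2 : b ^ 2 ≤ 0 := by nlinarith [hrpos.le, hr2, hra]
    constructor
    · nlinarith [sq_nonneg b]
    · exact ha

lemma mul_orth {U V : Matrix (Fin n) (Fin n) ℝ} (hU : Uᵀ * U = 1) (hV : Vᵀ * V = 1) :
    (U * V)ᵀ * (U * V) = 1 := by
  rw [Matrix.transpose_mul, Matrix.mul_assoc, ← Matrix.mul_assoc Uᵀ U V, hU,
    Matrix.one_mul, hV]

/-! ### The core maximization lemma -/

lemma core {N : ℕ} (M X₀ : Matrix (Fin N) (Fin N) ℝ) (hdet : 0 < M.det)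
    (hX₀ : X₀ ∈ SOset N)
    (hmax : ∀ X ∈ SOset N, (Mᵀ * X).trace ≤ (Mᵀ * X₀).trace)
    (K : Matrix (Fin N) (Fin N) ℝ)
    (hK : ∀ x : Fin N → ℝ, K.mulVec x ⬝ᵥ K.mulVec x ≤ x ⬝ᵥ x) :
    (Mᵀ * K).trace ≤ (Mᵀ * X₀).trace := by
  obtain ⟨hX₀o, hX₀d⟩ := hX₀
  have hX₀o' : X₀ * X₀ᵀ = 1 := mul_eq_one_comm.mp hX₀o
  set S := Mᵀ * X₀ with hS
  -- Step A: conjugated first/second-order conditions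
  have hstep : ∀ (W : Matrix (Fin N) (Fin N) ℝ), Wᵀ * W = 1 → ∀ i j : Fin N, i ≠ j →
      (Wᵀ * S * W) i j - (Wᵀ * S * W) j i = 0 ∧
        0 ≤ (Wᵀ * S * W) i i + (Wᵀ * S * W) j j := by
    intro W hW i j hij
    have hWW : W * Wᵀ = 1 := mul_eq_one_comm.mp hW
    have hW2 : W.det * W.det = 1 := by
      have := congrArg Matrix.det hW
      rwa [Matrix.det_mul, Matrix.det_transpose, Matrix.det_one] at this
    set T := Wᵀ * S * W with hT
    have key : ∀ c s : ℝ, c ^ 2 + s ^ 2 = 1 →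
        c * (T i i + T j j) + s * (T i j - T j i) ≤ T i i + T j j := by
      intro c s hcs
      have hG := givens_orth hij hcs
      have hGd := givens_det hij hcs
      set G := givens i j c s with hGdef
      have hWt : (Wᵀ)ᵀ * Wᵀ = 1 := by rwa [Matrix.transpose_transpose]
      have hR : X₀ * (W * G * Wᵀ) ∈ SOset N := by
        constructor
        · exact mul_orth hX₀o (mul_orth (mul_orth hW hG) hWt)
        · rw [Matrix.det_mul, Matrix.det_mul, Matrix.det_mul, hX₀d, hGd,
            Matrix.det_transpose]
          ring_nf
          nlinarith [hW2]
      have hle := hmax _ hR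
      have hL : (Mᵀ * (X₀ * (W * G * Wᵀ))).trace = (T * G).trace := by
        have e1 : Mᵀ * (X₀ * (W * G * Wᵀ)) = (S * W * G) * Wᵀ := by
          rw [hS]; noncomm_ring
        rw [e1, Matrix.trace_mul_comm (S * W * G) Wᵀ]
        congr 1
        rw [hT, hS]
        noncomm_ring
      rw [hL] at hle
      have hTr := trace_mul_givens T i j c s
      have hTtr : T.trace = S.trace := by
        rw [hT, Matrix.mul_assoc, Matrix.trace_mul_comm Wᵀ (S * W), Matrix.mul_assoc,
          hWW, Matrix.mul_one]
      rw [hTr, hTtr] at hle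
      nlinarith [hle]
    obtain ⟨hb, ha⟩ := scalar_opt key
    exact ⟨hb, ha⟩
  -- Step B: S is symmetric
  have hsym : Sᵀ = S := by
    ext a b
    rcases eq_or_ne a b with h | h
    · subst h; rfl
    · have h1 : (1 : Matrix (Fin N) (Fin N) ℝ)ᵀ * (1 : Matrix (Fin N) (Fin N) ℝ) = 1 := by
        simp
      have := (hstep 1 h1 b a (Ne.symm h)).1
      simp only [Matrix.transpose_one, Matrix.one_mul, Matrix.mul_one] at this
      have : S b a = S a b := by linarith
      simpa [Matrix.transpose_apply] using this
  have hherm : S.IsHermitian := by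
    show Sᴴ = S
    have : Sᴴ = Sᵀ := by ext a b; simp [Matrix.conjTranspose_apply]
    rw [this, hsym]
  -- Step C: spectral decomposition
  set W : Matrix (Fin N) (Fin N) ℝ := (hherm.eigenvectorUnitary : Matrix (Fin N) (Fin N) ℝ)
    with hWdef
  set lam : Fin N → ℝ := hherm.eigenvalues with hlam
  have hWo : Wᵀ * W = 1 := by
    have h2 := (Unitary.mem_iff.mp hherm.eigenvectorUnitary.2).1
    have : star W = Wᵀ := by
      ext a b; simp [Matrix.star_eq_conjTranspose, Matrix.conjTranspose_apply]
    rwa [this] at h2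
  have hWW : W * Wᵀ = 1 := mul_eq_one_comm.mp hWo
  have hspec : S = W * Matrix.diagonal lam * Wᵀ := by
    have h := hherm.spectral_theorem
    simp only [Unitary.conjStarAlgAut_apply, Unitary.coe_star] at h
    have hstar : star W = Wᵀ := by
      ext a b; simp [Matrix.star_eq_conjTranspose, Matrix.conjTranspose_apply]
    rw [hstar] at h
    simpa [RCLike.ofReal_real_eq_id] using h
  have hD : Wᵀ * S * W = Matrix.diagonal lam := by
    calc Wᵀ * S * W = (Wᵀ * W) * Matrix.diagonal lam * (Wᵀ * W) := by
          rw [hspec]; noncomm_ring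
    _ = Matrix.diagonal lam := by rw [hWo]; simp
  -- Step D: eigenvalues are nonnegative
  have hpair : ∀ i j : Fin N, i ≠ j → 0 ≤ lam i + lam j := by
    intro i j hij
    have := (hstep W hWo i j hij).2
    rw [hD] at this
    simpa [Matrix.diagonal_apply_eq] using this
  have hdetS : 0 < ∏ i, lam i := by
    have h1 : S.det = M.det := by
      rw [hS, Matrix.det_mul, Matrix.det_transpose, hX₀d, mul_one]
    have h2 : S.det = ∏ i, lam i := by
      have h3 := congrArg Matrix.det hD
      rw [Matrix.det_mul, Matrix.det_mul, Matrix.det_transpose, Matrix.det_diagonal] at h3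
      have h4 : W.det * W.det = 1 := by
        have := congrArg Matrix.det hWo
        rwa [Matrix.det_mul, Matrix.det_transpose, Matrix.det_one] at this
      nlinarith [h3, h4]
    rw [← h2, h1]
    exact hdet
  have hnonneg : ∀ i, 0 ≤ lam i := by
    intro i
    by_contra hneg
    push_neg at hneg
    have hpos : ∀ j ∈ Finset.univ.erase i, 0 < lam j := by
      intro j hj
      have hji : j ≠ i := Finset.ne_of_mem_erase hj
      have := hpair j i hji
      linarith
    have hprodpos : 0 < ∏ j ∈ Finset.univ.erase i, lam j := Finset.prod_pos hpos
    have : ∏ j, lam j = lam i * ∏ j ∈ Finset.univ.erase i, lam j :=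
      (Finset.mul_prod_erase Finset.univ lam (Finset.mem_univ i)).symm
    nlinarith [hdetS, hprodpos, this]
  -- Step E: the contraction bound
  set K' := X₀ᵀ * K with hK'
  have hKK : ∀ x : Fin N → ℝ, K'.mulVec x ⬝ᵥ K'.mulVec x ≤ x ⬝ᵥ x := by
    intro x
    have e1 : K'.mulVec x = X₀ᵀ.mulVec (K.mulVec x) := by
      rw [hK', ← Matrix.mulVec_mulVec]
    rw [e1, dot_mulVec_mulVec, Matrix.transpose_transpose, hX₀o', Matrix.one_mulVec]
    exact hK x
  have htr1 : (Mᵀ * K).trace = (Matrix.diagonal lam * (Wᵀ * K' * W)).trace := by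
    have e1 : Mᵀ * K = S * K' := by
      rw [hS, hK']
      calc Mᵀ * K = Mᵀ * ((X₀ * X₀ᵀ) * K) := by rw [hX₀o']; simp
      _ = Mᵀ * X₀ * (X₀ᵀ * K) := by noncomm_ring
    rw [e1, hspec]
    rw [show W * Matrix.diagonal lam * Wᵀ * K' = W * (Matrix.diagonal lam * Wᵀ * K') by
      noncomm_ring]
    rw [Matrix.trace_mul_comm W (Matrix.diagonal lam * Wᵀ * K')]
    congr 1
    noncomm_ring
  have hdiagtr : (Matrix.diagonal lam * (Wᵀ * K' * W)).trace
      = ∑ i, lam i * (Wᵀ * K' * W) i i := by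
    simp [Matrix.trace, Matrix.diag, Matrix.diagonal_mul]
  have hbound : ∀ i, (Wᵀ * K' * W) i i ≤ 1 := by
    intro i
    set w : Fin N → ℝ := fun a => W a i with hw
    have hww : w ⬝ᵥ w = 1 := by
      have h1 := congrFun (congrFun hWo i) i
      simpa [Matrix.mul_apply, Matrix.one_apply, dotProduct, hw] using h1
    have hentry : (Wᵀ * K' * W) i i = w ⬝ᵥ K'.mulVec w := by
      simp only [Matrix.mul_apply, Matrix.mulVec, dotProduct, Matrix.transpose_apply,
        Finset.sum_mul, Finset.mul_sum]
      rw [Finset.sum_comm]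
      refine Finset.sum_congr rfl fun a _ => Finset.sum_congr rfl fun b _ => ?_
      ring
    have hv := hKK w
    rw [hww] at hv
    have hcs := Finset.sum_mul_sq_le_sq_mul_sq Finset.univ w (K'.mulVec w)
    have h1 : (∑ a, w a ^ 2) = 1 := by
      have : (∑ a, w a ^ 2) = w ⬝ᵥ w := by simp [dotProduct, sq]
      rw [this, hww]
    have h2 : (∑ a, K'.mulVec w a ^ 2) = K'.mulVec w ⬝ᵥ K'.mulVec w := by
      simp [dotProduct, sq]
    have h3 : (∑ a, w a * K'.mulVec w a) = w ⬝ᵥ K'.mulVec w := by simp [dotProduct]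
    rw [h1, h2, h3] at hcs
    rw [hentry]
    nlinarith [hcs, hv]
  calc (Mᵀ * K).trace = ∑ i, lam i * (Wᵀ * K' * W) i i := by rw [htr1, hdiagtr]
  _ ≤ ∑ i, lam i := by
      refine Finset.sum_le_sum fun i _ => ?_
      have := mul_le_mul_of_nonneg_left (hbound i) (hnonneg i)
      simpa using this
  _ = (Matrix.diagonal lam).trace := by rw [Matrix.trace_diagonal]
  _ = S.trace := by
      rw [← hD, Matrix.mul_assoc, Matrix.trace_mul_comm Wᵀ (S * W), Matrix.mul_assoc,
        hWW, Matrix.mul_one]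
  _ = (Mᵀ * X₀).trace := rfl

/-! ### Existence of a maximizer on SO(N) -/

lemma one_mem_SOset (N : ℕ) : (1 : Matrix (Fin N) (Fin N) ℝ) ∈ SOset N :=
  ⟨by simp, by simp⟩

lemma exists_max (N : ℕ) (M : Matrix (Fin N) (Fin N) ℝ) :
    ∃ X₀ ∈ SOset N, ∀ X ∈ SOset N, (Mᵀ * X).trace ≤ (Mᵀ * X₀).trace := by
  have hclosed : IsClosed (SOset N) := by
    have heq : SOset N = {X : Matrix (Fin N) (Fin N) ℝ | Xᵀ * X = 1}
        ∩ {X : Matrix (Fin N) (Fin N) ℝ | X.det = 1} := rfl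
    rw [heq]
    exact (isClosed_eq ((continuous_id.matrix_transpose).matrix_mul continuous_id)
      continuous_const).inter (isClosed_eq continuous_id.matrix_det continuous_const)
  have hsub : SOset N ⊆ Set.univ.pi fun _ : Fin N =>
      Set.univ.pi fun _ : Fin N => Set.Icc (-1 : ℝ) 1 := by
    rintro X ⟨hXo, -⟩
    intro i _
    intro j _
    have hcol : ∑ a, X a j * X a j = 1 := by
      have h1 := congrFun (congrFun hXo j) j
      simpa [Matrix.mul_apply, Matrix.one_apply] using h1
    have hle : X i j * X i j ≤ 1 := by
      have h2 : X i j * X i j ≤ ∑ a, X a j * X a j := by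
        simpa using Finset.single_le_sum (f := fun a => X a j * X a j)
          (fun a _ => mul_self_nonneg _) (Finset.mem_univ i)
      linarith
    constructor <;> nlinarith [sq_nonneg (X i j + 1), sq_nonneg (X i j - 1)]
  have hcomp : IsCompact (SOset N) :=
    IsCompact.of_isClosed_subset
      (isCompact_univ_pi fun _ => isCompact_univ_pi fun _ => isCompact_Icc) hclosed hsub
  have hcont : Continuous fun X : Matrix (Fin N) (Fin N) ℝ => (Mᵀ * X).trace :=
    (continuous_const.matrix_mul continuous_id).matrix_trace
  obtain ⟨X₀, hmem, hmax⟩ := hcomp.exists_isMaxOn ⟨1, one_mem_SOset N⟩ hcont.continuousOn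
  exact ⟨X₀, hmem, fun X hX => hmax hX⟩

end FrobSOAux

open FrobSOAux

/-- If `B` has orthonormal columns, the columns of `A` are orthogonal to those of `B`, and
`(A|B)` has positive determinant, then `dist((A|B), SO(d+k)) = dist(A, O(d, d+k))`,
where `O(d, d+k)` is the set of `(d+k) × d` matrices with orthonormal columns. -/
theorem frobDist_juxt_SO_eq_frobDist_isometries
    (d k : ℕ) (hd : 1 ≤ d) (hk : 1 ≤ k)
    (A : Matrix (Fin (d + k)) (Fin d) ℝ) (B : Matrix (Fin (d + k)) (Fin k) ℝ)
    (hB : Bᵀ * B = 1) (hAB : Aᵀ * B = 0) (hdet : 0 < (juxt A B).det) :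
    frobDist (juxt A B) (SOset (d + k)) =
      frobDist A {Q : Matrix (Fin (d + k)) (Fin d) ℝ | Qᵀ * Q = 1} := by
  set M := juxt A B with hM
  set St : Set (Matrix (Fin (d + k)) (Fin d) ℝ) := {Q | Qᵀ * Q = 1} with hSt
  have hbddSO : BddBelow ((fun X => frobNorm (M - X)) '' SOset (d + k)) := by
    refine ⟨0, ?_⟩
    rintro y ⟨X, -, rfl⟩
    exact Real.sqrt_nonneg _
  have hbddSt : BddBelow ((fun X => frobNorm (A - X)) '' St) := by
    refine ⟨0, ?_⟩
    rintro y ⟨X, -, rfl⟩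
    exact Real.sqrt_nonneg _
  have hStne : St.Nonempty := by
    refine ⟨(1 : Matrix (Fin (d + k)) (Fin (d + k)) ℝ).submatrix id (Fin.castAdd k), ?_⟩
    exact submatrix_stiefel 1 (by simp)
  have hSOne : (SOset (d + k)).Nonempty := ⟨1, one_mem_SOset _⟩
  apply le_antisymm
  · -- `frobDist M SO ≤ frobDist A St`
    obtain ⟨X₀, hX₀mem, hX₀max⟩ := exists_max (d + k) M
    apply le_csInf (hStne.image _)
    rintro b ⟨Q, hQ, rfl⟩
    have hQ' : Qᵀ * Q = 1 := hQ
    refine csInf_le_of_le hbddSO ⟨X₀, hX₀mem, rfl⟩ ?_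
    -- key trace inequality
    set P : Matrix (Fin (d + k)) (Fin (d + k)) ℝ := 1 - B * Bᵀ with hP
    set C : Matrix (Fin (d + k)) (Fin d) ℝ := P * Q with hC
    set K : Matrix (Fin (d + k)) (Fin (d + k)) ℝ := juxt C B with hKdef
    have hPt : Pᵀ = P := by
      rw [hP]
      simp [Matrix.transpose_sub, Matrix.transpose_mul, Matrix.transpose_one]
    have hPB : P * B = 0 := by
      rw [hP, Matrix.sub_mul, Matrix.one_mul, Matrix.mul_assoc, hB, Matrix.mul_one,
        sub_self]
    have hPP : P * P = P := by
      rw [hP]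
      rw [Matrix.sub_mul, Matrix.mul_sub, Matrix.mul_sub]
      rw [Matrix.one_mul, Matrix.mul_one]
      rw [show B * Bᵀ * (B * Bᵀ) = B * (Bᵀ * B) * Bᵀ by simp only [Matrix.mul_assoc], hB]
      simp
    -- K is a contraction
    have hKcontr : ∀ x : Fin (d + k) → ℝ, K.mulVec x ⬝ᵥ K.mulVec x ≤ x ⬝ᵥ x := by
      intro x
      set x₁ : Fin d → ℝ := fun j => x (Fin.castAdd k j) with hx₁
      set x₂ : Fin k → ℝ := fun j => x (Fin.natAdd d j) with hx₂
      rw [hKdef, juxt_mulVec]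
      set u := C.mulVec x₁ with hu
      set v := B.mulVec x₂ with hv
      have hexp : (u + v) ⬝ᵥ (u + v) = u ⬝ᵥ u + 2 * (u ⬝ᵥ v) + v ⬝ᵥ v := by
        simp [add_dotProduct, dotProduct_add, dotProduct_comm v u]
        ring
      have hcross : u ⬝ᵥ v = 0 := by
        rw [hu, hv, dot_mulVec_mulVec]
        have : Cᵀ * B = 0 := by
          rw [hC, Matrix.transpose_mul, hPt, Matrix.mul_assoc, hPB, Matrix.mul_zero]
        rw [this]
        simp
      have hvv : v ⬝ᵥ v = x₂ ⬝ᵥ x₂ := by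
        rw [hv, dot_mulVec_mulVec, hB, Matrix.one_mulVec]
      have huu : u ⬝ᵥ u ≤ x₁ ⬝ᵥ x₁ := by
        rw [hu, dot_mulVec_mulVec]
        have hCC : Cᵀ * C = 1 - (Qᵀ * B) * (Qᵀ * B)ᵀ := by
          rw [hC, Matrix.transpose_mul, hPt]
          rw [show Qᵀ * P * (P * Q) = Qᵀ * (P * P) * Q by simp only [Matrix.mul_assoc], hPP]
          rw [hP]
          rw [Matrix.mul_sub, Matrix.sub_mul, Matrix.mul_one]
          rw [hQ']
          congr 1
          rw [Matrix.transpose_mul, Matrix.transpose_transpose]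
          simp only [Matrix.mul_assoc]
        rw [hCC]
        rw [Matrix.sub_mulVec, dotProduct_sub, Matrix.one_mulVec]
        have hnn : 0 ≤ x₁ ⬝ᵥ ((Qᵀ * B) * (Qᵀ * B)ᵀ).mulVec x₁ := by
          have := dot_mulVec_mulVec ((Qᵀ * B)ᵀ) ((Qᵀ * B)ᵀ) x₁ x₁
          rw [Matrix.transpose_transpose] at this
          rw [← this]
          exact dot_self_nonneg _
        linarith
      have hxsplit : x ⬝ᵥ x = x₁ ⬝ᵥ x₁ + x₂ ⬝ᵥ x₂ := dot_split x x
      rw [hexp, hxsplit, hcross, hvv]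
      linarith
    -- trace identity
    have htrK : (Mᵀ * K).trace = (Aᵀ * Q).trace + (k : ℝ) := by
      have h1 : ip M K = ip A C + ip B B := ip_juxt A C B B
      have h2 : ip A C = (Aᵀ * Q).trace := by
        rw [ip_eq_trace, hC, hP]
        have h5 : Aᵀ * (1 - B * Bᵀ) = Aᵀ := by
          rw [Matrix.mul_sub, Matrix.mul_one, ← Matrix.mul_assoc, hAB, Matrix.zero_mul,
            sub_zero]
        rw [← Matrix.mul_assoc, h5]
      have h3 : ip B B = (k : ℝ) := by
        rw [ip_self_of_orth B hB]
        simp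
      have h4 : ip M K = (Mᵀ * K).trace := ip_eq_trace M K
      rw [← h4, h1, h2, h3]
    have hcore := core M X₀ hdet hX₀mem hX₀max K hKcontr
    rw [htrK] at hcore
    -- convert to norms
    show frobNorm (M - X₀) ≤ frobNorm (A - Q)
    rw [frobNorm_eq_ip, frobNorm_eq_ip]
    apply Real.sqrt_le_sqrt
    have e1 : ip (M - X₀) (M - X₀) = ip M M - 2 * ip M X₀ + ((d : ℝ) + k) := by
      rw [ip_sub_self, ip_self_of_orth X₀ hX₀mem.1]
      push_cast [Fintype.card_fin]
      ring
    have e2 : ip (A - Q) (A - Q) = ip A A - 2 * ip A Q + (d : ℝ) := by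
      rw [ip_sub_self, ip_self_of_orth Q hQ']
      simp
    have e3 : ip M M = ip A A + (k : ℝ) := by
      rw [hM, ip_juxt, ip_self_of_orth B hB]
      simp
    have e4 : ip M X₀ = (Mᵀ * X₀).trace := ip_eq_trace M X₀
    have e5 : ip A Q = (Aᵀ * Q).trace := ip_eq_trace A Q
    rw [e1, e2, e3, e4, e5]
    linarith
  · -- `frobDist A St ≤ frobDist M SO`
    apply le_csInf (hSOne.image _)
    rintro b ⟨X, hX, rfl⟩
    obtain ⟨hXo, -⟩ := hX
    set Q := X.submatrix id (Fin.castAdd k) with hQdef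
    set X₂ := X.submatrix id (Fin.natAdd d) with hX₂def
    have hQSt : Q ∈ St := submatrix_stiefel X hXo
    refine csInf_le_of_le hbddSt ⟨Q, hQSt, rfl⟩ ?_
    show frobNorm (A - Q) ≤ frobNorm (M - X)
    rw [frobNorm_eq_ip, frobNorm_eq_ip]
    apply Real.sqrt_le_sqrt
    have hXj : X = juxt Q X₂ := (juxt_submatrix X).symm
    have e1 : M - X = juxt (A - Q) (B - X₂) := by
      rw [hM, hXj, juxt_sub]
    rw [e1, ip_juxt]
    have := ip_self_nonneg (B - X₂)
    linarith
end

section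
/- Let d ≥ 1 and M ≥ 0. Let F and K be real (d+1)×d matrices, v ∈ ℝ^{d+1}, and let S be a real d×d matrix with operator norm ‖S‖_op ≤ M. If √(‖F‖_F² + ‖K‖_F²) ≥ (3+2M)·√(d+1), then √(‖F‖_F² + ‖K‖_F²) ≤ (3+2M)·( dist((F|v), SO(d+1)) + ‖F·S + K‖_F ). -/
open Matrix

/-- The `(d+1) × (d+1)` matrix `(F|v)` whose first `d` columns are those of the
`(d+1) × d` matrix `F` and whose last column is the vector `v`. -/
def juxtCol {m d : ℕ} (F : Matrix (Fin m) (Fin d) ℝ) (v : Fin m → ℝ) :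
    Matrix (Fin m) (Fin (d + 1)) ℝ :=
  Matrix.of fun i => Fin.snoc (F i) (v i)

section Frob

attribute [local instance] Matrix.frobeniusSeminormedAddCommGroup

lemma frobNorm_eq_norm {m n : Type*} [Fintype m] [Fintype n] (A : Matrix m n ℝ) :
    frobNorm A = ‖A‖ := by
  rw [Matrix.frobenius_norm_def, frobNorm, Real.sqrt_eq_rpow]
  congr 1
  refine Finset.sum_congr rfl fun i _ => Finset.sum_congr rfl fun j _ => ?_
  rw [Real.norm_eq_abs, show (2:ℝ) = ((2:ℕ):ℝ) by norm_num, Real.rpow_natCast, sq_abs]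

lemma frob_triangle {m n : Type*} [Fintype m] [Fintype n] (A B : Matrix m n ℝ) :
    frobNorm B ≤ frobNorm (A + B) + frobNorm A := by
  rw [frobNorm_eq_norm, frobNorm_eq_norm, frobNorm_eq_norm]
  calc ‖B‖ = ‖(A + B) - A‖ := by congr 1; abel
    _ ≤ ‖A + B‖ + ‖A‖ := norm_sub_le _ _

lemma frob_lower {m n : Type*} [Fintype m] [Fintype n] (A X : Matrix m n ℝ) :
    frobNorm A - frobNorm X ≤ frobNorm (A - X) := by
  rw [frobNorm_eq_norm, frobNorm_eq_norm, frobNorm_eq_norm]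
  linarith [abs_norm_sub_norm_le A X, le_abs_self (‖A‖ - ‖X‖)]

end Frob

lemma frobNorm_nonneg {m n : Type*} [Fintype m] [Fintype n] (A : Matrix m n ℝ) :
    0 ≤ frobNorm A := Real.sqrt_nonneg _

lemma frobNorm_le_juxt {m d : ℕ} (F : Matrix (Fin m) (Fin d) ℝ) (v : Fin m → ℝ) :
    frobNorm F ≤ frobNorm (juxtCol F v) := by
  apply Real.sqrt_le_sqrt
  apply Finset.sum_le_sum
  intro i _
  have : ∑ j, (juxtCol F v i j) ^ 2
      = (∑ j : Fin d, (F i j) ^ 2) + (v i) ^ 2 := by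
    rw [Fin.sum_univ_castSucc]
    simp [juxtCol]
  rw [this]
  exact le_add_of_nonneg_right (sq_nonneg _)

lemma frobNorm_SO {n : ℕ} {X : Matrix (Fin n) (Fin n) ℝ} (hX : X ∈ SOset n) :
    frobNorm X = Real.sqrt n := by
  have h1 : ∑ i, ∑ j, (X i j) ^ 2 = (n : ℝ) := by
    rw [Finset.sum_comm]
    have : ∀ j, ∑ i, (X i j) ^ 2 = (Xᵀ * X) j j := by
      intro j
      simp [Matrix.mul_apply, Matrix.transpose_apply, sq]
    simp_rw [this, hX.1]
    simp [Matrix.one_apply]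
  rw [frobNorm, h1]

set_option synthInstance.maxHeartbeats 1000000 in
lemma frobNorm_mul_right_le {d m : ℕ} (M : ℝ) (hM : 0 ≤ M)
    (F : Matrix (Fin m) (Fin d) ℝ) (S : Matrix (Fin d) (Fin d) ℝ)
    (hS : ‖Matrix.toEuclideanCLM (𝕜 := ℝ) S‖ ≤ M) :
    frobNorm (F * S) ≤ M * frobNorm F := by
  have hST : ‖Matrix.toEuclideanCLM (𝕜 := ℝ) Sᵀ‖ ≤ M := by
    have hstar : Sᵀ = star S := by
      ext i j
      simp [Matrix.star_eq_conjTranspose, Matrix.conjTranspose_apply]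
    rw [hstar, map_star, ContinuousLinearMap.star_eq_adjoint,
      LinearIsometryEquiv.norm_map ContinuousLinearMap.adjoint]
    exact hS
  -- key pointwise bound
  have key : ∀ x : Fin d → ℝ,
      ∑ j, ((Sᵀ *ᵥ x) j) ^ 2 ≤ M ^ 2 * ∑ j, (x j) ^ 2 := by
    intro x
    have hb := (Matrix.toEuclideanCLM (𝕜 := ℝ) Sᵀ).le_opNorm ((WithLp.equiv 2 _).symm x)
    have happ : Matrix.toEuclideanCLM (𝕜 := ℝ) Sᵀ ((WithLp.equiv 2 _).symm x)
        = (WithLp.equiv 2 _).symm (Sᵀ *ᵥ x) := by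
      exact Matrix.toEuclideanCLM_toLp _ _
    rw [happ] at hb
    have hn1 : ‖(WithLp.equiv 2 (Fin d → ℝ)).symm (Sᵀ *ᵥ x)‖
        = Real.sqrt (∑ j, ((Sᵀ *ᵥ x) j) ^ 2) := by
      rw [EuclideanSpace.norm_eq]
      congr 1
      refine Finset.sum_congr rfl fun j _ => ?_
      rw [Real.norm_eq_abs, sq_abs]
      rfl
    have hn2 : ‖(WithLp.equiv 2 (Fin d → ℝ)).symm x‖
        = Real.sqrt (∑ j, (x j) ^ 2) := by
      rw [EuclideanSpace.norm_eq]
      congr 1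
      refine Finset.sum_congr rfl fun j _ => ?_
      rw [Real.norm_eq_abs, sq_abs]
      rfl
    rw [hn1, hn2] at hb
    have hb2 : Real.sqrt (∑ j, ((Sᵀ *ᵥ x) j) ^ 2)
        ≤ M * Real.sqrt (∑ j, (x j) ^ 2) := by
      calc Real.sqrt (∑ j, ((Sᵀ *ᵥ x) j) ^ 2)
          ≤ ‖Matrix.toEuclideanCLM (𝕜 := ℝ) Sᵀ‖ * Real.sqrt (∑ j, (x j) ^ 2) := hb
        _ ≤ M * Real.sqrt (∑ j, (x j) ^ 2) :=
            mul_le_mul_of_nonneg_right hST (Real.sqrt_nonneg _)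
    have h1 : (0:ℝ) ≤ ∑ j, ((Sᵀ *ᵥ x) j) ^ 2 :=
      Finset.sum_nonneg fun j _ => sq_nonneg _
    have h2 : (0:ℝ) ≤ ∑ j, (x j) ^ 2 :=
      Finset.sum_nonneg fun j _ => sq_nonneg _
    calc ∑ j, ((Sᵀ *ᵥ x) j) ^ 2
        = Real.sqrt (∑ j, ((Sᵀ *ᵥ x) j) ^ 2) ^ 2 := (Real.sq_sqrt h1).symm
      _ ≤ (M * Real.sqrt (∑ j, (x j) ^ 2)) ^ 2 := by
          apply pow_le_pow_left₀ (Real.sqrt_nonneg _) hb2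
      _ = M ^ 2 * ∑ j, (x j) ^ 2 := by
          rw [mul_pow, Real.sq_sqrt h2]
  have hrow : ∀ i j, (F * S) i j = (Sᵀ *ᵥ (F i)) j := by
    intro i j
    simp [Matrix.mul_apply, Matrix.mulVec, dotProduct, Matrix.transpose_apply,
      mul_comm]
  have hsum : ∑ i, ∑ j, ((F * S) i j) ^ 2
      ≤ M ^ 2 * ∑ i, ∑ j, (F i j) ^ 2 := by
    rw [Finset.mul_sum]
    apply Finset.sum_le_sum
    intro i _
    simp_rw [hrow i]
    exact key (F i)
  calc frobNorm (F * S) = Real.sqrt (∑ i, ∑ j, ((F * S) i j) ^ 2) := rfl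
    _ ≤ Real.sqrt (M ^ 2 * ∑ i, ∑ j, (F i j) ^ 2) := Real.sqrt_le_sqrt hsum
    _ = M * frobNorm F := by
        rw [Real.sqrt_mul (sq_nonneg M), Real.sqrt_sq hM, frobNorm]

/-- Pointwise truncation estimate: if `√(‖F‖² + ‖K‖²) ≥ (3+2M)√(d+1)` and `‖S‖_op ≤ M`, then
`√(‖F‖² + ‖K‖²) ≤ (3+2M)·(dist((F|v), SO(d+1)) + ‖F·S + K‖)`. -/
theorem truncation_pointwise_estimate
    (d : ℕ) (hd : 1 ≤ d) (M : ℝ) (hM : 0 ≤ M)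
    (F K : Matrix (Fin (d + 1)) (Fin d) ℝ) (v : Fin (d + 1) → ℝ)
    (S : Matrix (Fin d) (Fin d) ℝ)
    (hS : ‖Matrix.toEuclideanCLM (𝕜 := ℝ) S‖ ≤ M)
    (h : (3 + 2 * M) * Real.sqrt (d + 1) ≤ Real.sqrt (frobNorm F ^ 2 + frobNorm K ^ 2)) :
    Real.sqrt (frobNorm F ^ 2 + frobNorm K ^ 2) ≤
      (3 + 2 * M) * (frobDist (juxtCol F v) (SOset (d + 1)) + frobNorm (F * S + K)) := by
  set a := frobNorm F with ha'
  set b := frobNorm K with hb'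
  set Q := Real.sqrt (a ^ 2 + b ^ 2) with hQ'
  set D := frobDist (juxtCol F v) (SOset (d + 1)) with hD'
  set E := frobNorm (F * S + K) with hE'
  have ha0 : 0 ≤ a := frobNorm_nonneg F
  have hb0 : 0 ≤ b := frobNorm_nonneg K
  have hE0 : 0 ≤ E := frobNorm_nonneg _
  -- Q ≤ a + b
  have hQab : Q ≤ a + b := by
    rw [hQ']
    calc Real.sqrt (a ^ 2 + b ^ 2) ≤ Real.sqrt ((a + b) ^ 2) := by
          apply Real.sqrt_le_sqrt; nlinarith
      _ = a + b := Real.sqrt_sq (by linarith)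
  -- b ≤ E + M * a
  have hbE : b ≤ E + M * a := by
    have h1 : frobNorm K ≤ frobNorm (F * S + K) + frobNorm (F * S) := frob_triangle _ _
    have h2 : frobNorm (F * S) ≤ M * a := frobNorm_mul_right_le M hM F S hS
    calc b ≤ frobNorm (F * S + K) + frobNorm (F * S) := h1
      _ ≤ E + M * a := by rw [hE']; linarith
  -- a ≤ D + √(d+1)
  have hne : (SOset (d + 1)).Nonempty := by
    refine ⟨1, ?_, ?_⟩
    · rw [Matrix.transpose_one, mul_one]
    · exact Matrix.det_one
  have haD : a - Real.sqrt (d + 1) ≤ D := by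
    rw [hD', frobDist]
    apply le_csInf (hne.image _)
    rintro x ⟨X, hX, rfl⟩
    show a - Real.sqrt (d + 1) ≤ frobNorm (juxtCol F v - X)
    have h1 : frobNorm (juxtCol F v) - frobNorm X ≤ frobNorm (juxtCol F v - X) :=
      frob_lower _ _
    have h2 : frobNorm X = Real.sqrt (d + 1) := by
      rw [frobNorm_SO hX]
      norm_num
    have h3 : a ≤ frobNorm (juxtCol F v) := frobNorm_le_juxt F v
    linarith
  have hD0 : 0 ≤ D := by
    rw [hD', frobDist]
    apply Real.sInf_nonneg
    rintro x ⟨X, _, rfl⟩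
    exact frobNorm_nonneg _
  -- arithmetic
  have hs0 : (0:ℝ) ≤ Real.sqrt (d + 1) := Real.sqrt_nonneg _
  have hc : (0:ℝ) < 3 + 2 * M := by linarith
  set s := Real.sqrt (d + 1) with hs'
  -- from h : (3 + 2M) * s ≤ Q
  have hQ1 : Q ≤ (1 + M) * D + E + (1 + M) * s := by nlinarith
  nlinarith [mul_le_mul_of_nonneg_left hQ1 hc.le,
    mul_le_mul_of_nonneg_left h (show (0:ℝ) ≤ 1 + M by linarith),
    mul_nonneg (mul_nonneg hM hM) hD0, mul_nonneg hM hD0, mul_nonneg hM hE0]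
end

section
/- Let n ≥ 1 and let ν be a Borel probability measure on the space of real n×n matrices (with its Euclidean/Frobenius structure) that is supported on SO(n), i.e. ν(SO(n)) = 1. If the barycenter B = ∫ A dν(A) (a Bochner integral, which exists since SO(n) is bounded) belongs to SO(n), then ν is the Dirac measure δ_B concentrated at B. -/
open Matrix MeasureTheory

/-- The standard (Borel) measurable structure on `n × n` real matrices, i.e. the product
σ-algebra of the Euclidean space of matrices. -/
noncomputable instance matrixMeasurableSpace (n : ℕ) :
    MeasurableSpace (Matrix (Fin n) (Fin n) ℝ) :=
  MeasurableSpace.pi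

attribute [local instance] Matrix.normedAddCommGroup Matrix.normedSpace

/-- The entry evaluation continuous linear map. -/
noncomputable def entryCLM (n : ℕ) (i j : Fin n) : Matrix (Fin n) (Fin n) ℝ →L[ℝ] ℝ :=
  LinearMap.toContinuousLinearMap
    { toFun := fun A => A i j
      map_add' := fun _ _ => rfl
      map_smul' := fun _ _ => rfl }

@[simp] lemma entryCLM_apply (n : ℕ) (i j : Fin n) (A : Matrix (Fin n) (Fin n) ℝ) :
    entryCLM n i j A = A i j := rfl

lemma entry_sq_sum_SO {n : ℕ} {A : Matrix (Fin n) (Fin n) ℝ} (hA : A ∈ SOset n) (j : Fin n) :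
    ∑ k, A k j * A k j = 1 := by
  have := congrArg (fun M : Matrix (Fin n) (Fin n) ℝ => M j j) hA.1
  simpa [Matrix.mul_apply, Matrix.one_apply, Matrix.transpose_apply] using this

lemma entry_abs_le_one_SO {n : ℕ} {A : Matrix (Fin n) (Fin n) ℝ} (hA : A ∈ SOset n)
    (i j : Fin n) : |A i j| ≤ 1 := by
  refine abs_le_one_iff_mul_self_le_one.2 ?_
  calc A i j * A i j ≤ ∑ k, A k j * A k j :=
        Finset.single_le_sum (fun k _ => mul_self_nonneg (A k j)) (Finset.mem_univ i)
    _ = 1 := entry_sq_sum_SO hA j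

lemma sum_sq_SO {n : ℕ} {A : Matrix (Fin n) (Fin n) ℝ} (hA : A ∈ SOset n) :
    (∑ i, ∑ j, A i j ^ 2) = (n : ℝ) := by
  rw [Finset.sum_comm]
  have : ∀ j : Fin n, (∑ i, A i j ^ 2) = 1 := by
    intro j
    simpa [sq] using entry_sq_sum_SO hA j
  simp [this]

/-- If `ν` is a Borel probability measure on `n × n` matrices supported on `SO(n)` whose
barycenter `∫ A dν(A)` belongs to `SO(n)`, then `ν` is the Dirac mass at its barycenter. -/
theorem measure_supported_on_SO_barycenter_mem_SO_eq_dirac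
    (n : ℕ) (hn : 1 ≤ n) (ν : Measure (Matrix (Fin n) (Fin n) ℝ))
    [IsProbabilityMeasure ν] (hsupp : ν (SOset n) = 1)
    (hbar : (∫ A, A ∂ν) ∈ SOset n) :
    ν = Measure.dirac (∫ A, A ∂ν) := by
  classical
  haveI : BorelSpace (Matrix (Fin n) (Fin n) ℝ) := Pi.borelSpace
  set B := ∫ A, A ∂ν with hBdef
  -- `SO(n)` is closed, hence measurable
  have hSOclosed : IsClosed (SOset n) := by
    have h1 : IsClosed {A : Matrix (Fin n) (Fin n) ℝ | Aᵀ * A = 1} :=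
      isClosed_eq (continuous_id.matrix_transpose.matrix_mul continuous_id) continuous_const
    have h2 : IsClosed {A : Matrix (Fin n) (Fin n) ℝ | A.det = 1} :=
      isClosed_eq continuous_id.matrix_det continuous_const
    exact h1.inter h2
  have hSOmeas : MeasurableSet (SOset n) := hSOclosed.measurableSet
  have hae : ∀ᵐ A ∂ν, A ∈ SOset n := by
    rw [ae_iff]
    exact (prob_compl_eq_zero_iff hSOmeas).2 hsupp
  -- measurability of entries
  have hmE : ∀ i j : Fin n, Measurable (fun A : Matrix (Fin n) (Fin n) ℝ => A i j) :=
    fun i j => (measurable_pi_apply j).comp (measurable_pi_apply i)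
  -- integrability of the identity
  letI : ContinuousENorm (Matrix (Fin n) (Fin n) ℝ) := SeminormedAddGroup.toContinuousENorm
  have hint : Integrable (fun A : Matrix (Fin n) (Fin n) ℝ => A) ν := by
    haveI : @TopologicalSpace.PseudoMetrizableSpace (Matrix (Fin n) (Fin n) ℝ)
      UniformSpace.toTopologicalSpace :=
      (inferInstance : TopologicalSpace.PseudoMetrizableSpace (Fin n → Fin n → ℝ))
    haveI : @SecondCountableTopology (Matrix (Fin n) (Fin n) ℝ)
      UniformSpace.toTopologicalSpace :=
      (inferInstance : SecondCountableTopology (Fin n → Fin n → ℝ))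
    refine ⟨measurable_id.aestronglyMeasurable, HasFiniteIntegral.of_bounded (C := 1) ?_⟩
    filter_upwards [hae] with A hA
    exact (Matrix.norm_le_iff zero_le_one).2 fun i j => by
      simpa [Real.norm_eq_abs] using entry_abs_le_one_SO hA i j
  -- integrability of entries
  have hintE : ∀ i j : Fin n, Integrable (fun A : Matrix (Fin n) (Fin n) ℝ => A i j) ν := by
    intro i j
    refine ⟨(hmE i j).aestronglyMeasurable, HasFiniteIntegral.of_bounded (C := 1) ?_⟩
    filter_upwards [hae] with A hA
    simpa [Real.norm_eq_abs] using entry_abs_le_one_SO hA i j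
  -- integrability of entry squares
  have hintSq : ∀ i j : Fin n,
      Integrable (fun A : Matrix (Fin n) (Fin n) ℝ => A i j ^ 2) ν := by
    intro i j
    refine ⟨((hmE i j).pow_const 2).aestronglyMeasurable,
      HasFiniteIntegral.of_bounded (C := 1) ?_⟩
    filter_upwards [hae] with A hA
    have := entry_abs_le_one_SO hA i j
    rw [Real.norm_eq_abs, abs_pow]
    calc |A i j| ^ 2 ≤ 1 ^ 2 := by
          exact pow_le_pow_left₀ (abs_nonneg _) this 2
      _ = 1 := one_pow 2
  -- entry integrals equal entries of the barycenter
  have EB : ∀ i j : Fin n, (∫ A, A i j ∂ν) = B i j := by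
    intro i j
    have := (entryCLM n i j).integral_comp_comm hint
    exact this
  -- integrability of the squared deviation terms
  have hintDev : ∀ i j : Fin n,
      Integrable (fun A : Matrix (Fin n) (Fin n) ℝ => (A i j - B i j) ^ 2) ν := by
    intro i j
    have heq : (fun A : Matrix (Fin n) (Fin n) ℝ => (A i j - B i j) ^ 2)
        = fun A => A i j ^ 2 - (2 * B i j) * A i j + B i j ^ 2 := by
      funext A; ring
    rw [heq]
    exact (((hintSq i j).sub ((hintE i j).const_mul _)).add (integrable_const _))
  have hintDevSum : Integrable
      (fun A : Matrix (Fin n) (Fin n) ℝ => ∑ i, ∑ j, (A i j - B i j) ^ 2) ν :=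
    integrable_finset_sum _ fun i _ => integrable_finset_sum _ fun j _ => hintDev i j
  -- the integral of ∑ (A i j)^2 is n
  have I2 : (∫ A, (∑ i, ∑ j, A i j ^ 2) ∂ν) = (n : ℝ) := by
    rw [integral_congr_ae (g := fun _ => (n : ℝ)) ?_, integral_const]
    · simp
    · filter_upwards [hae] with A hA using sum_sq_SO hA
  -- each squared-deviation integral
  have hterm : ∀ i j : Fin n,
      (∫ A, (A i j - B i j) ^ 2 ∂ν) = (∫ A, A i j ^ 2 ∂ν) - B i j ^ 2 := by
    intro i j
    have heq : (fun A : Matrix (Fin n) (Fin n) ℝ => (A i j - B i j) ^ 2)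
        = fun A => (A i j ^ 2 - (2 * B i j) * A i j) + B i j ^ 2 := by
      funext A; ring
    have h1 : Integrable (fun A : Matrix (Fin n) (Fin n) ℝ => (2 * B i j) * A i j) ν :=
      (hintE i j).const_mul _
    have h2 : Integrable
        (fun A : Matrix (Fin n) (Fin n) ℝ => A i j ^ 2 - (2 * B i j) * A i j) ν :=
      (hintSq i j).sub h1
    rw [heq, integral_add h2 (integrable_const _), integral_sub (hintSq i j) h1,
      integral_const_mul, EB, integral_const]
    simp only [measure_univ, probReal_univ, ENNReal.toReal_one, smul_eq_mul, one_mul]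
    ring
  -- total squared deviation integrates to zero
  have hzero : (∫ A, (∑ i, ∑ j, (A i j - B i j) ^ 2) ∂ν) = 0 := by
    rw [integral_finset_sum _ fun i _ => integrable_finset_sum _ fun j _ => hintDev i j]
    have : ∀ i ∈ Finset.univ, (∫ A, (∑ j, (A i j - B i j) ^ 2) ∂ν)
        = ∑ j, ((∫ A, A i j ^ 2 ∂ν) - B i j ^ 2) := by
      intro i _
      rw [integral_finset_sum _ fun j _ => hintDev i j]
      exact Finset.sum_congr rfl fun j _ => hterm i j
    rw [Finset.sum_congr rfl this]
    have hI2' : (∑ i, ∑ j, (∫ A, A i j ^ 2 ∂ν)) = (n : ℝ) := by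
      rw [← I2, integral_finset_sum _ fun i _ => integrable_finset_sum _ fun j _ => hintSq i j]
      exact Finset.sum_congr rfl fun i _ =>
        (integral_finset_sum _ fun j _ => hintSq i j).symm
    have hB2 : (∑ i, ∑ j, B i j ^ 2) = (n : ℝ) := sum_sq_SO hbar
    simp only [Finset.sum_sub_distrib]
    rw [hI2', hB2, sub_self]
  -- hence a.e. A = B
  have haeeq : (fun A : Matrix (Fin n) (Fin n) ℝ => ∑ i, ∑ j, (A i j - B i j) ^ 2) =ᵐ[ν] 0 :=
    (integral_eq_zero_iff_of_nonneg
      (fun A => Finset.sum_nonneg fun i _ => Finset.sum_nonneg fun j _ => sq_nonneg _)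
      hintDevSum).1 hzero
  have haeB : ∀ᵐ A ∂ν, A = B := by
    filter_upwards [haeeq] with A hA
    have hA' : (∑ i, ∑ j, (A i j - B i j) ^ 2) = 0 := hA
    have h0 : ∀ i ∈ Finset.univ, (∑ j, (A i j - B i j) ^ 2) = (0 : ℝ) :=
      (Finset.sum_eq_zero_iff_of_nonneg fun i _ =>
        Finset.sum_nonneg fun j _ => sq_nonneg _).1 hA'
    ext i j
    have h1 : (A i j - B i j) ^ 2 = 0 :=
      (Finset.sum_eq_zero_iff_of_nonneg fun j _ => sq_nonneg _).1
        (h0 i (Finset.mem_univ i)) j (Finset.mem_univ j)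
    have := (pow_eq_zero_iff two_ne_zero).1 h1
    linarith
  have hKB : ν {B}ᶜ = 0 := by
    have := haeB
    rw [ae_iff] at this
    simpa [Set.compl_def] using this
  refine Measure.ext fun s hs => ?_
  rw [Measure.dirac_apply' _ hs]
  by_cases hBs : B ∈ s
  · have hsc : ν sᶜ = 0 :=
      measure_mono_null (fun x hx => by
        simp only [Set.mem_compl_iff, Set.mem_singleton_iff]
        rintro rfl; exact hx hBs) hKB
    have h1 : ν s = 1 := (prob_compl_eq_zero_iff hs).1 hsc
    simp [h1, Set.indicator_of_mem hBs]
  · have h0 : ν s = 0 :=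
      measure_mono_null (fun x hx => by
        simp only [Set.mem_compl_iff, Set.mem_singleton_iff]
        rintro rfl; exact hBs hx) hKB
    simp [h0, Set.indicator_of_notMem hBs]
end
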